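/- Let X = [0,1], ξ = {(0,c),(c,1)} for some c ∈ (0,1), and let T:X→X be piecewise increasing, mapping each Z ∈ ξ homeomorphically onto (0,1). Assume T restricted to (c,1) admits a uniformly expanding C² extension to [c,1], while T restricted to (0,c) extends to a C² map on (0,c] and is expanding except for an indifferent fixed point at x* = 0: for every ε > 0 there is ρ(ε) > 1 with T' ≥ ρ(ε) on [ε,c], while T0 = 0, lim_{x↓0} T'x = 1, and T' is increasing on some interval (0,δ). Let μ ≪ λ be the unique T-invariant probability measure with continuous density version h on (0,1]. Let (E_k)_{k≥1} be intervals containing x* with λ(E_k) → 0, set Y := (c,1) and E'_k := Y ∩ T^{-1}E_k. Then μ(E'_k) ∼ (h(c)/T'(c^+)) · λ(E_k) as k → ∞, where T'(c^+) is the right derivative of T at c; moreover μ(E'_k) = o(μ(E_k)) as k → ∞. -/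

import Mathlib

open MeasureTheory Filter Set Topology
open scoped ENNReal

/-- First hitting time `φ_E` (values in `ℝ≥0∞`; `∞` if the orbit never hits `E`). -/
noncomputable def hitTime {X : Type*} (T : X → X) (E : Set X) (x : X) : ℝ≥0∞ :=
  sInf {t : ℝ≥0∞ | ∃ n : ℕ, 1 ≤ n ∧ T^[n] x ∈ E ∧ t = (n : ℝ≥0∞)}

/-- First hitting time, `ℕ`-valued (junk value `0` if the orbit never hits `E`). -/
noncomputable def hitN {X : Type*} (T : X → X) (E : Set X) (x : X) : ℕ :=
  sInf {n : ℕ | 1 ≤ n ∧ T^[n] x ∈ E}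

/-- First return map `T_Y`. -/
noncomputable def returnMap {X : Type*} (T : X → X) (Y : Set X) (x : X) : X :=
  T^[hitN T Y x] x

/-- Normalized restriction `μ_Y = μ(Y)⁻¹ μ(Y ∩ ·)`. -/
noncomputable def condMeas {X : Type*} [MeasurableSpace X] (μ : Measure X) (Y : Set X) :
    Measure X := (μ Y)⁻¹ • μ.restrict Y

/-- Convergence in distribution, at continuity points of the limit distribution function,
of `[0,∞]`-valued random variables `f k` on `(X, ν)` to a random variable `R` on `(Ω, P)`. -/
def TendstoInDistrib {X Ω : Type*} [MeasurableSpace X] [MeasurableSpace Ω]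
    (ν : Measure X) (f : ℕ → X → ℝ≥0∞) (P : Measure Ω) (R : Ω → ℝ≥0∞) : Prop :=
  ∀ t : ℝ, ContinuousAt (fun s : ℝ => (P {ω | R ω ≤ ENNReal.ofReal s}).toReal) t →
    Tendsto (fun k => (ν {x | f k x ≤ ENNReal.ofReal t}).toReal) atTop
      (𝓝 ((P {ω | R ω ≤ ENNReal.ofReal t}).toReal))

/-- `f k → ∞` in `ν`-measure. -/
def TendstoInfInMeasure {X : Type*} [MeasurableSpace X] (ν : Measure X)
    (f : ℕ → X → ℝ≥0∞) : Prop :=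
  ∀ N : ℕ, 1 ≤ N → Tendsto (fun k => ν {x | f k x ≤ (N : ℝ≥0∞)}) atTop (𝓝 0)

/-- Points of `Y` can only reach `E` via `E'`. -/
def OnlyReachVia {X : Type*} [MeasurableSpace X] (μ : Measure X) (T : X → X)
    (Y E E' : Set X) : Prop :=
  ∀ n : ℕ, ∀ᵐ x ∂μ.restrict Y, T^[n] x ∈ E → ∃ j ≤ n, T^[j] x ∈ E'

open scoped Classical in
noncomputable def brInv (T : ℝ → ℝ) (S : Set ℝ) (s : ℝ) : ℝ :=
  if h : s ∈ T '' S then h.choose else 0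

lemma brInv_spec {T : ℝ → ℝ} {S : Set ℝ} {s : ℝ} (h : s ∈ T '' S) :
    brInv T S s ∈ S ∧ T (brInv T S s) = s := by
  classical
  rw [brInv, dif_pos h]; exact ⟨h.choose_spec.1, h.choose_spec.2⟩

/-- endpoint limit from monotonicity and image (right endpoint). -/
lemma tendsto_left_of_image {f : ℝ → ℝ} {a b A B : ℝ} (hab : a < b) (hAB : A < B)
    (hmono : StrictMonoOn f (Set.Ioo a b)) (himg : f '' Set.Ioo a b = Set.Ioo A B) :
    Tendsto f (𝓝[<] b) (𝓝 B) := by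
  rw [Metric.tendsto_nhds]
  intro ε hε
  set y := (max A (B - ε) + B) / 2 with hy
  have hyB : max A (B - ε) < B := max_lt hAB (by linarith)
  have hymem : y ∈ Set.Ioo A B := by
    constructor
    · have := le_max_left A (B - ε); simp only [hy]; linarith
    · simp only [hy]; linarith
  obtain ⟨x₀, hx₀, hfx₀⟩ : ∃ x₀ ∈ Set.Ioo a b, f x₀ = y := by
    rw [← himg] at hymem; exact hymem
  have hmem : Set.Ioo x₀ b ∈ 𝓝[<] b := Ioo_mem_nhdsLT_of_mem ⟨hx₀.2, le_refl b⟩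
  filter_upwards [hmem] with x hx
  have hxab : x ∈ Set.Ioo a b := ⟨lt_trans hx₀.1 hx.1, hx.2⟩
  have h1 : f x₀ < f x := hmono hx₀ hxab hx.1
  have h2 : f x < B := by
    have : f x ∈ Set.Ioo A B := by rw [← himg]; exact ⟨x, hxab, rfl⟩
    exact this.2
  have h3 : B - ε < f x := by
    have := le_max_right A (B - ε); rw [hfx₀] at h1; simp only [hy] at h1; linarith
  rw [Real.dist_eq, abs_lt]; constructor <;> linarith

/-- endpoint limit from monotonicity and image (left endpoint). -/
lemma tendsto_right_of_image {f : ℝ → ℝ} {a b A B : ℝ} (hab : a < b) (hAB : A < B)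
    (hmono : StrictMonoOn f (Set.Ioo a b)) (himg : f '' Set.Ioo a b = Set.Ioo A B) :
    Tendsto f (𝓝[>] a) (𝓝 A) := by
  rw [Metric.tendsto_nhds]
  intro ε hε
  set y := (min B (A + ε) + A) / 2 with hy
  have hyA : A < min B (A + ε) := lt_min hAB (by linarith)
  have hymem : y ∈ Set.Ioo A B := by
    constructor
    · simp only [hy]; linarith
    · have := min_le_left B (A + ε); simp only [hy]; linarith
  obtain ⟨x₀, hx₀, hfx₀⟩ : ∃ x₀ ∈ Set.Ioo a b, f x₀ = y := by
    rw [← himg] at hymem; exact hymem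
  have hmem : Set.Ioo a x₀ ∈ 𝓝[>] a := Ioo_mem_nhdsGT_of_mem ⟨le_refl a, hx₀.1⟩
  filter_upwards [hmem] with x hx
  have hxab : x ∈ Set.Ioo a b := ⟨hx.1, lt_trans hx.2 hx₀.2⟩
  have h1 : f x < f x₀ := hmono hxab hx₀ hx.2
  have h2 : A < f x := by
    have : f x ∈ Set.Ioo A B := by rw [← himg]; exact ⟨x, hxab, rfl⟩
    exact this.1
  have h3 : f x < A + ε := by
    have := min_le_right B (A + ε); rw [hfx₀] at h1; simp only [hy] at h1; linarith
  rw [Real.dist_eq, abs_lt]; constructor <;> linarith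

lemma mvt_bound {f : ℝ → ℝ} {a b lo hi : ℝ}
    (hcont : ContinuousOn f (Set.Icc a b))
    (hder : ∀ x ∈ Set.Ioo a b, ∃ d, HasDerivAt f d x ∧ lo ≤ d ∧ d ≤ hi) :
    ∀ x ∈ Set.Icc a b, ∀ y ∈ Set.Icc a b, x ≤ y →
      lo * (y - x) ≤ f y - f x ∧ f y - f x ≤ hi * (y - x) := by
  intro x hx y hy hxy
  have hdiff : DifferentiableOn ℝ f (interior (Set.Icc a b)) := by
    rw [interior_Icc]
    exact fun z hz => ((hder z hz).choose_spec.1).differentiableAt.differentiableWithinAt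
  have hlo : ∀ z ∈ interior (Set.Icc a b), lo ≤ deriv f z := by
    rw [interior_Icc]; intro z hz
    obtain ⟨d, hd, h1, _⟩ := hder z hz
    rw [hd.deriv]; exact h1
  have hhi : ∀ z ∈ interior (Set.Icc a b), deriv f z ≤ hi := by
    rw [interior_Icc]; intro z hz
    obtain ⟨d, hd, _, h2⟩ := hder z hz
    rw [hd.deriv]; exact h2
  exact ⟨(convex_Icc a b).mul_sub_le_image_sub_of_le_deriv hcont hdiff hlo x hx y hy hxy,
    (convex_Icc a b).image_sub_le_mul_sub_of_deriv_le hcont hdiff hhi x hx y hy hxy⟩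

lemma hasDerivAt_of_extension {T T₁ : ℝ → ℝ} {S U : Set ℝ} (hU : IsOpen U) (hUS : U ⊆ S)
    (hext : Set.EqOn T₁ T U) (hC : ContDiffOn ℝ 2 T₁ S) {x : ℝ} (hx : x ∈ U) :
    HasDerivAt T (derivWithin T₁ S x) x := by
  have hd : DifferentiableWithinAt ℝ T₁ S x :=
    (hC.differentiableOn two_ne_zero) x (hUS hx)
  have h1 : HasDerivAt T₁ (derivWithin T₁ S x) x :=
    hd.hasDerivWithinAt.hasDerivAt (mem_of_superset (hU.mem_nhds hx) hUS)
  exact h1.congr_of_eventuallyEq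
    (eventually_of_mem (hU.mem_nhds hx) (fun y hy => (hext hy).symm))

structure DynCtx (c : ℝ) (T : ℝ → ℝ) : Prop where
  hc0 : 0 < c
  hc1 : c < 1
  mono₁ : StrictMonoOn T (Set.Ioo 0 c)
  mono₂ : StrictMonoOn T (Set.Ioo c 1)
  mapsL : ∀ x ∈ Set.Ioo 0 c, T x ∈ Set.Ioo 0 1
  mapsR : ∀ x ∈ Set.Ioo c 1, T x ∈ Set.Ioo 0 1
  imgL : T '' Set.Ioo 0 c = Set.Ioo 0 1
  imgR : T '' Set.Ioo c 1 = Set.Ioo 0 1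
  contL : ContinuousOn T (Set.Ioo 0 c)
  contR : ContinuousOn T (Set.Ioo c 1)
  growL : ∀ a ∈ Set.Ioo 0 c, ∃ ρ > 1, ∀ x y, a ≤ x → x ≤ y → y < c → ρ * (y - x) ≤ T y - T x
  growR : ∃ ρ > 1, ∀ x y, c < x → x ≤ y → y < 1 → ρ * (y - x) ≤ T y - T x
  lipL : ∀ a ∈ Set.Ioo 0 c, ∃ M > 0, ∀ x y, a ≤ x → x ≤ y → y < c → T y - T x ≤ M * (y - x)
  lipR : ∃ M > 0, ∀ x y, c < x → x ≤ y → y < 1 → T y - T x ≤ M * (y - x)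
  lt_map : ∀ x ∈ Set.Ioo 0 c, x < T x

namespace DynCtx

variable {c : ℝ} {T : ℝ → ℝ} (H : DynCtx c T)

noncomputable def u (_H : DynCtx c T) (s : ℝ) : ℝ := brInv T (Set.Ioo 0 c) s
noncomputable def w (_H : DynCtx c T) (s : ℝ) : ℝ := brInv T (Set.Ioo c 1) s

lemma u_mem {s : ℝ} (hs : s ∈ Set.Ioo 0 1) : H.u s ∈ Set.Ioo 0 c ∧ T (H.u s) = s :=
  brInv_spec (by rw [H.imgL]; exact hs)

lemma w_mem {s : ℝ} (hs : s ∈ Set.Ioo 0 1) : H.w s ∈ Set.Ioo c 1 ∧ T (H.w s) = s :=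
  brInv_spec (by rw [H.imgR]; exact hs)

lemma u_lt_self {s : ℝ} (hs : s ∈ Set.Ioo 0 1) : H.u s < s := by
  obtain ⟨hm, hT⟩ := H.u_mem hs
  have := H.lt_map _ hm; rw [hT] at this; exact this

lemma u_lt_iff {x s : ℝ} (hx : x ∈ Set.Ioo 0 c) (hs : s ∈ Set.Ioo 0 1) :
    T x < s ↔ x < H.u s := by
  obtain ⟨hm, hT⟩ := H.u_mem hs
  constructor
  · intro hlt
    have h2 : T x < T (H.u s) := by rw [hT]; exact hlt
    exact (H.mono₁.lt_iff_lt hx hm).mp h2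
  · intro hlt
    have := H.mono₁ hx hm hlt; rwa [hT] at this

lemma w_lt_iff {x s : ℝ} (hx : x ∈ Set.Ioo c 1) (hs : s ∈ Set.Ioo 0 1) :
    T x < s ↔ x < H.w s := by
  obtain ⟨hm, hT⟩ := H.w_mem hs
  constructor
  · intro hlt
    have h2 : T x < T (H.w s) := by rw [hT]; exact hlt
    exact (H.mono₂.lt_iff_lt hx hm).mp h2
  · intro hlt
    have := H.mono₂ hx hm hlt; rwa [hT] at this

lemma u_strictMono {s s' : ℝ} (hs : s ∈ Set.Ioo 0 1) (hs' : s' ∈ Set.Ioo 0 1)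
    (hss : s < s') : H.u s < H.u s' := by
  have := (H.u_lt_iff (H.u_mem hs).1 hs').mp (by rw [(H.u_mem hs).2]; exact hss)
  exact this

lemma w_strictMono {s s' : ℝ} (hs : s ∈ Set.Ioo 0 1) (hs' : s' ∈ Set.Ioo 0 1)
    (hss : s < s') : H.w s < H.w s' := by
  have := (H.w_lt_iff (H.w_mem hs).1 hs').mp (by rw [(H.w_mem hs).2]; exact hss)
  exact this

lemma u_contract {s s' : ℝ} (hs : s ∈ Set.Ioo 0 1) (hs' : s' ∈ Set.Ioo 0 1)
    (hss : s ≤ s') : H.u s' - H.u s ≤ s' - s := by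
  rcases eq_or_lt_of_le hss with rfl | hlt
  · simp
  obtain ⟨ρ, hρ, hgrow⟩ := H.growL _ (H.u_mem hs).1
  have h1 := hgrow (H.u s) (H.u s') (le_refl _) (H.u_strictMono hs hs' hlt).le (H.u_mem hs').1.2
  rw [(H.u_mem hs).2, (H.u_mem hs').2] at h1
  nlinarith [(H.u_strictMono hs hs' hlt)]

lemma w_contract {s s' : ℝ} (hs : s ∈ Set.Ioo 0 1) (hs' : s' ∈ Set.Ioo 0 1)
    (hss : s ≤ s') : H.w s' - H.w s ≤ s' - s := by
  rcases eq_or_lt_of_le hss with rfl | hlt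
  · simp
  obtain ⟨ρ, hρ, hgrow⟩ := H.growR
  have h1 := hgrow (H.w s) (H.w s') (H.w_mem hs).1.1 (H.w_strictMono hs hs' hlt).le
    (H.w_mem hs').1.2
  rw [(H.w_mem hs).2, (H.w_mem hs').2] at h1
  nlinarith [(H.w_strictMono hs hs' hlt)]

end DynCtx

theorem DynCtx.hit {c : ℝ} {T : ℝ → ℝ} (H : DynCtx c T) {p q : ℝ}
    (hp : 0 < p) (hpq : p < q) (hq : q < 1) :
    ∃ z ∈ Set.Icc p q, ∃ m, (∀ j < m, T^[j] z ∈ Set.Ioo 0 1) ∧ T^[m] z = c := by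
  by_contra hcon
  push_neg at hcon
  set α : ℕ → ℝ := fun n => T^[n] p with hα
  set β : ℕ → ℝ := fun n => T^[n] q with hβ
  have hαs : ∀ n, α (n + 1) = T (α n) := fun n => Function.iterate_succ_apply' T n p
  have hβs : ∀ n, β (n + 1) = T (β n) := fun n => Function.iterate_succ_apply' T n q
  -- the key invariant
  have key : ∀ n, (0 < α n ∧ β n < 1 ∧ α n < β n) ∧
      (∀ y ∈ Set.Icc (α n) (β n), ∃ z ∈ Set.Icc p q,
        (∀ j < n, T^[j] z ∈ Set.Ioo 0 1) ∧ T^[n] z = y) := by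
    intro n
    induction n with
    | zero =>
      refine ⟨⟨hp, hq, hpq⟩, ?_⟩
      intro y hy
      exact ⟨y, ⟨hy.1, hy.2⟩, by simp⟩
    | succ n ih =>
      obtain ⟨⟨h0, h1, h01⟩, hsurj⟩ := ih
      have hside : β n < c ∨ c < α n := by
        rcases lt_or_ge (β n) c with hbc | hbc
        · exact Or.inl hbc
        rcases lt_or_ge c (α n) with hca | hca
        · exact Or.inr hca
        · exfalso
          obtain ⟨z, hz, horb, hTz⟩ := hsurj c ⟨hca, hbc⟩
          exact hcon z hz n horb hTz
      rcases hside with hbc | hca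
      · -- left side : Icc (α n) (β n) ⊆ Ioo 0 c
        have hsub : Set.Icc (α n) (β n) ⊆ Set.Ioo 0 c := fun x hx =>
          ⟨lt_of_lt_of_le h0 hx.1, lt_of_le_of_lt hx.2 hbc⟩
        have hmemα : α n ∈ Set.Ioo 0 c := hsub ⟨le_refl _, h01.le⟩
        have hmemβ : β n ∈ Set.Ioo 0 c := hsub ⟨h01.le, le_refl _⟩
        have hTα := H.mapsL _ hmemα
        have hTβ := H.mapsL _ hmemβ
        refine ⟨⟨by rw [hαs]; exact hTα.1, by rw [hβs]; exact hTβ.2,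
          by rw [hαs, hβs]; exact H.mono₁ hmemα hmemβ h01⟩, ?_⟩
        intro y hy
        rw [hαs, hβs] at hy
        have hivt : Set.Icc (T (α n)) (T (β n)) ⊆ T '' Set.Icc (α n) (β n) :=
          intermediate_value_Icc h01.le (H.contL.mono hsub)
        obtain ⟨x, hx, hTx⟩ := hivt hy
        obtain ⟨z, hz, horb, hTz⟩ := hsurj x hx
        refine ⟨z, hz, ?_, ?_⟩
        · intro j hj
          rcases lt_or_eq_of_le (Nat.lt_succ_iff.mp hj) with hj' | rfl
          · exact horb j hj'
          · rw [hTz]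
            have := hsub hx
            exact ⟨this.1, lt_trans this.2 H.hc1⟩
        · rw [Function.iterate_succ_apply', hTz, hTx]
      · -- right side
        have hsub : Set.Icc (α n) (β n) ⊆ Set.Ioo c 1 := fun x hx =>
          ⟨lt_of_lt_of_le hca hx.1, lt_of_le_of_lt hx.2 h1⟩
        have hmemα : α n ∈ Set.Ioo c 1 := hsub ⟨le_refl _, h01.le⟩
        have hmemβ : β n ∈ Set.Ioo c 1 := hsub ⟨h01.le, le_refl _⟩
        have hTα := H.mapsR _ hmemα
        have hTβ := H.mapsR _ hmemβ
        refine ⟨⟨by rw [hαs]; exact hTα.1, by rw [hβs]; exact hTβ.2,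
          by rw [hαs, hβs]; exact H.mono₂ hmemα hmemβ h01⟩, ?_⟩
        intro y hy
        rw [hαs, hβs] at hy
        have hivt : Set.Icc (T (α n)) (T (β n)) ⊆ T '' Set.Icc (α n) (β n) :=
          intermediate_value_Icc h01.le (H.contR.mono hsub)
        obtain ⟨x, hx, hTx⟩ := hivt hy
        obtain ⟨z, hz, horb, hTz⟩ := hsurj x hx
        refine ⟨z, hz, ?_, ?_⟩
        · intro j hj
          rcases lt_or_eq_of_le (Nat.lt_succ_iff.mp hj) with hj' | rfl
          · exact horb j hj'
          · rw [hTz]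
            have := hsub hx
            exact ⟨lt_trans H.hc0 this.1, this.2⟩
        · rw [Function.iterate_succ_apply', hTz, hTx]
  -- sides
  have hside : ∀ n, β n < c ∨ c < α n := by
    intro n
    obtain ⟨⟨h0, h1, h01⟩, hsurj⟩ := key n
    rcases lt_or_ge (β n) c with hbc | hbc
    · exact Or.inl hbc
    rcases lt_or_ge c (α n) with hca | hca
    · exact Or.inr hca
    · exfalso
      obtain ⟨z, hz, horb, hTz⟩ := hsurj c ⟨hca, hbc⟩
      exact hcon z hz n horb hTz
  set ℓ : ℕ → ℝ := fun n => β n - α n with hℓ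
  have hℓpos : ∀ n, 0 < ℓ n := fun n => sub_pos.mpr (key n).1.2.2
  have hℓ1 : ∀ n, ℓ n ≤ 1 := by
    intro n
    have := (key n).1
    simp only [hℓ]; linarith [this.1, this.2.1]
  obtain ⟨ρ₂, hρ₂, hgrowR⟩ := H.growR
  have hstep : ∀ n, ℓ n ≤ ℓ (n + 1) := by
    intro n
    obtain ⟨h0, h1, h01⟩ := (key n).1
    rcases hside n with hbc | hca
    · obtain ⟨ρ, hρ, hg⟩ := H.growL (α n) ⟨h0, lt_trans h01 hbc⟩
      have := hg (α n) (β n) (le_refl _) h01.le hbc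
      simp only [hℓ, hαs, hβs]
      nlinarith [hℓpos n]
    · have := hgrowR (α n) (β n) hca h01.le h1
      simp only [hℓ, hαs, hβs]
      nlinarith [hℓpos n]
  have hℓmono : Monotone ℓ := monotone_nat_of_le_succ hstep
  rcases Classical.em (∃ N, ∀ n, N ≤ n → β n < c) with ⟨N, hN⟩ | hB
  · -- eventually always on the left
    have hαmono : ∀ m, α N ≤ α (N + m) := by
      intro m
      induction m with
      | zero => exact le_refl _
      | succ m ih =>
        have hmem : α (N + m) ∈ Set.Ioo 0 c :=
          ⟨(key (N + m)).1.1, lt_trans (key (N + m)).1.2.2 (hN _ (Nat.le_add_right N m))⟩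
        calc α N ≤ α (N + m) := ih
          _ ≤ T (α (N + m)) := (H.lt_map _ hmem).le
          _ = α (N + m + 1) := (hαs _).symm
    have ha₀ : α N ∈ Set.Ioo 0 c :=
      ⟨(key N).1.1, lt_trans (key N).1.2.2 (hN N (le_refl N))⟩
    obtain ⟨ρ, hρ, hg⟩ := H.growL (α N) ha₀
    have claim : ∀ m, ρ ^ m * ℓ N ≤ ℓ (N + m) := by
      intro m
      induction m with
      | zero => simp
      | succ m ih =>
        have h01 := (key (N + m)).1.2.2
        have hbc : β (N + m) < c := hN _ (Nat.le_add_right N m)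
        have := hg (α (N + m)) (β (N + m)) (hαmono m) h01.le hbc
        have h2 : ρ * ℓ (N + m) ≤ ℓ (N + m + 1) := by
          simp only [hℓ, hαs, hβs]; linarith
        have h3 : ρ ^ (m + 1) * ℓ N = ρ * (ρ ^ m * ℓ N) := by ring
        rw [h3]
        calc ρ * (ρ ^ m * ℓ N) ≤ ρ * ℓ (N + m) := by nlinarith
          _ ≤ ℓ (N + m + 1) := h2
    obtain ⟨m, hm⟩ := pow_unbounded_of_one_lt (1 / ℓ N) hρ
    have h1 : 1 < ρ ^ m * ℓ N := by
      rw [div_lt_iff₀ (hℓpos N)] at hm; linarith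
    linarith [claim m, hℓ1 (N + m)]
  · push_neg at hB
    have claim : ∀ m, ∃ n, ρ₂ ^ m * ℓ 0 ≤ ℓ n := by
      intro m
      induction m with
      | zero => exact ⟨0, by simp⟩
      | succ m ih =>
        obtain ⟨n, hn⟩ := ih
        obtain ⟨n', hn', hβn'⟩ := hB n
        have hca : c < α n' := by
          rcases hside n' with hbc | hca
          · exact absurd hbc (not_lt.mpr hβn')
          · exact hca
        obtain ⟨h0, h1, h01⟩ := (key n').1
        have := hgrowR (α n') (β n') hca h01.le h1
        have h2 : ρ₂ * ℓ n' ≤ ℓ (n' + 1) := by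
          simp only [hℓ, hαs, hβs]; linarith
        have h4 : ℓ n ≤ ℓ n' := hℓmono hn'
        refine ⟨n' + 1, ?_⟩
        have h3 : ρ₂ ^ (m + 1) * ℓ 0 = ρ₂ * (ρ₂ ^ m * ℓ 0) := by ring
        rw [h3]
        calc ρ₂ * (ρ₂ ^ m * ℓ 0) ≤ ρ₂ * ℓ n' := by nlinarith
          _ ≤ ℓ (n' + 1) := h2
    obtain ⟨m, hm⟩ := pow_unbounded_of_one_lt (1 / ℓ 0) hρ₂
    obtain ⟨n, hn⟩ := claim m
    have h1 : 1 < ρ₂ ^ m * ℓ 0 := by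
      rw [div_lt_iff₀ (hℓpos 0)] at hm; linarith
    linarith [hℓ1 n]

lemma dens_apply {μ : Measure ℝ} {h : ℝ → ℝ}
    (hdens : μ = (volume.restrict (Set.Icc (0:ℝ) 1)).withDensity
      (fun x => ENNReal.ofReal (h x)))
    {s : Set ℝ} (hs : MeasurableSet s) (hsub : s ⊆ Set.Icc (0:ℝ) 1) :
    μ s = ∫⁻ x in s, ENNReal.ofReal (h x) ∂volume := by
  rw [hdens, withDensity_apply _ hs, Measure.restrict_restrict hs,
    Set.inter_eq_self_of_subset_left hsub]

lemma squeeze_bounds {μ : Measure ℝ} {h : ℝ → ℝ}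
    (hdens : μ = (volume.restrict (Set.Icc (0:ℝ) 1)).withDensity
      (fun x => ENNReal.ofReal (h x)))
    {α β : ℝ} (hsub : Set.Ioo α β ⊆ Set.Icc (0:ℝ) 1) {h₀ ε : ℝ}
    (hbd : ∀ x ∈ Set.Ioo α β, |h x - h₀| ≤ ε) :
    ENNReal.ofReal (h₀ - ε) * ENNReal.ofReal (β - α) ≤ μ (Set.Ioo α β) ∧
      μ (Set.Ioo α β) ≤ ENNReal.ofReal (h₀ + ε) * ENNReal.ofReal (β - α) := by
  have hμ : μ (Set.Ioo α β) = ∫⁻ x in Set.Ioo α β, ENNReal.ofReal (h x) ∂volume :=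
    dens_apply hdens measurableSet_Ioo hsub
  have hvol : volume (Set.Ioo α β) = ENNReal.ofReal (β - α) := Real.volume_Ioo
  constructor
  · rw [hμ, ← hvol, ← lintegral_indicator measurableSet_Ioo,
      ← lintegral_indicator_const measurableSet_Ioo (ENNReal.ofReal (h₀ - ε))]
    refine lintegral_mono fun x => ?_
    by_cases hx : x ∈ Set.Ioo α β
    · simp only [Set.indicator_of_mem hx]
      exact ENNReal.ofReal_le_ofReal (by have := hbd x hx; rw [abs_le] at this; linarith)
    · simp [Set.indicator_of_notMem hx]
  · rw [hμ, ← hvol, ← lintegral_indicator measurableSet_Ioo,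
      ← lintegral_indicator_const measurableSet_Ioo (ENNReal.ofReal (h₀ + ε))]
    refine lintegral_mono fun x => ?_
    by_cases hx : x ∈ Set.Ioo α β
    · simp only [Set.indicator_of_mem hx]
      exact ENNReal.ofReal_le_ofReal (by have := hbd x hx; rw [abs_le] at this; linarith)
    · simp [Set.indicator_of_notMem hx]

lemma pos_somewhere {μ : Measure ℝ} [IsProbabilityMeasure μ] {h : ℝ → ℝ}
    (hdens : μ = (volume.restrict (Set.Icc (0:ℝ) 1)).withDensity
      (fun x => ENNReal.ofReal (h x))) :
    ∃ x ∈ Set.Ioo (0:ℝ) 1, 0 < h x := by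
  by_contra hcon
  push_neg at hcon
  have h1 : μ Set.univ = 1 := measure_univ
  have h2 : μ Set.univ = ∫⁻ x in Set.Icc (0:ℝ) 1, ENNReal.ofReal (h x) ∂volume := by
    rw [hdens, withDensity_apply _ MeasurableSet.univ, Measure.restrict_univ]
  have h3 : ∫⁻ x in Set.Icc (0:ℝ) 1, ENNReal.ofReal (h x) ∂volume
      = ∫⁻ x in Set.Ioo (0:ℝ) 1, ENNReal.ofReal (h x) ∂volume :=
    (setLIntegral_congr (Filter.EventuallyEq.symm Ioo_ae_eq_Icc))
  have h4 : ∫⁻ x in Set.Ioo (0:ℝ) 1, ENNReal.ofReal (h x) ∂volume = 0 := by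
    rw [← lintegral_indicator measurableSet_Ioo]
    have : ∀ x, (Set.Ioo (0:ℝ) 1).indicator (fun x => ENNReal.ofReal (h x)) x ≤ 0 := by
      intro x
      by_cases hx : x ∈ Set.Ioo (0:ℝ) 1
      · simp only [Set.indicator_of_mem hx]
        rw [ENNReal.ofReal_eq_zero.mpr (hcon x hx)]
      · simp [Set.indicator_of_notMem hx]
    refine le_antisymm ?_ (zero_le)
    calc (∫⁻ x, (Set.Ioo (0:ℝ) 1).indicator (fun x => ENNReal.ofReal (h x)) x ∂volume)
        ≤ ∫⁻ _, 0 ∂volume := lintegral_mono this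
      _ = 0 := lintegral_zero
  rw [h2, h3, h4] at h1
  exact zero_ne_one h1

lemma DynCtx.preim_mono {c : ℝ} {T : ℝ → ℝ} (H : DynCtx c T) {μ : Measure ℝ}
    (hpre : ∀ A : Set ℝ, MeasurableSet A → μ (T ⁻¹' A) = μ A)
    {t' t : ℝ} (ht' : t' ∈ Set.Ioo (0:ℝ) 1) (ht : t ∈ Set.Ioo (0:ℝ) 1) :
    μ (Set.Ioo (H.u t') (H.u t)) ≤ μ (Set.Ioo t' t) ∧
      μ (Set.Ioo (H.w t') (H.w t)) ≤ μ (Set.Ioo t' t) := by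
  have hsubu : Set.Ioo (H.u t') (H.u t) ⊆ T ⁻¹' (Set.Ioo t' t) := by
    intro x hx
    have hxm : x ∈ Set.Ioo 0 c :=
      ⟨lt_trans (H.u_mem ht').1.1 hx.1, lt_trans hx.2 (H.u_mem ht).1.2⟩
    refine ⟨?_, ?_⟩
    · have := H.mono₁ (H.u_mem ht').1 hxm hx.1; rwa [(H.u_mem ht').2] at this
    · have := H.mono₁ hxm (H.u_mem ht).1 hx.2; rwa [(H.u_mem ht).2] at this
  have hsubw : Set.Ioo (H.w t') (H.w t) ⊆ T ⁻¹' (Set.Ioo t' t) := by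
    intro x hx
    have hxm : x ∈ Set.Ioo c 1 :=
      ⟨lt_trans (H.w_mem ht').1.1 hx.1, lt_trans hx.2 (H.w_mem ht).1.2⟩
    refine ⟨?_, ?_⟩
    · have := H.mono₂ (H.w_mem ht').1 hxm hx.1; rwa [(H.w_mem ht').2] at this
    · have := H.mono₂ hxm (H.w_mem ht).1 hx.2; rwa [(H.w_mem ht).2] at this
  exact ⟨(measure_mono hsubu).trans (le_of_eq (hpre _ measurableSet_Ioo)),
    (measure_mono hsubw).trans (le_of_eq (hpre _ measurableSet_Ioo))⟩

lemma DynCtx.zero_prop {c : ℝ} {T : ℝ → ℝ} (H : DynCtx c T) {μ : Measure ℝ} {h : ℝ → ℝ}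
    (hdens : μ = (volume.restrict (Set.Icc (0:ℝ) 1)).withDensity
      (fun x => ENNReal.ofReal (h x)))
    (hhcont : ContinuousOn h (Set.Ioc 0 1))
    (hpre : ∀ A : Set ℝ, MeasurableSet A → μ (T ⁻¹' A) = μ A)
    {t : ℝ} (ht : t ∈ Set.Ioo (0:ℝ) 1) (hht : h t ≤ 0) :
    h (H.u t) ≤ 0 ∧ h (H.w t) ≤ 0 := by
  have hct : ContinuousWithinAt h (Set.Ioc 0 1) t := hhcont t ⟨ht.1, ht.2.le⟩
  constructor
  · -- u branch
    set y := H.u t with hy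
    obtain ⟨hym, hTy⟩ := H.u_mem ht
    have hy01 : y ∈ Set.Ioc (0:ℝ) 1 := ⟨hym.1, le_of_lt (lt_trans hym.2 H.hc1)⟩
    have hcy : ContinuousWithinAt h (Set.Ioc 0 1) y := hhcont y hy01
    obtain ⟨M, hM0, hM⟩ := H.lipL (y/2) ⟨by linarith [hym.1], by linarith [hym.2, hym.1]⟩
    have main : ∀ ε : ℝ, 0 < ε → h y - ε ≤ ε * M := by
      intro ε hε
      obtain ⟨δ₁, hδ₁, hδ₁p⟩ := Metric.continuousWithinAt_iff.mp hcy ε hε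
      obtain ⟨δ₂, hδ₂, hδ₂p⟩ := Metric.continuousWithinAt_iff.mp hct ε hε
      set η := min (min δ₁ δ₂) (min (y/2) (t/2)) / 2 with hηdef
      have hη : 0 < η := by
        apply div_pos _ (by norm_num)
        exact lt_min (lt_min hδ₁ hδ₂) (lt_min (by linarith [hym.1]) (by linarith [ht.1]))
      have hηδ₁ : η < δ₁ := by
        have := min_le_left (min δ₁ δ₂) (min (y/2) (t/2))
        have := min_le_left δ₁ δ₂
        simp only [hηdef]; linarith
      have hηδ₂ : η < δ₂ := by
        have := min_le_left (min δ₁ δ₂) (min (y/2) (t/2))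
        have := min_le_right δ₁ δ₂
        simp only [hηdef]; linarith
      have hηy : η ≤ y / 4 := by
        have := min_le_right (min δ₁ δ₂) (min (y/2) (t/2))
        have := min_le_left (y/2) (t/2)
        simp only [hηdef]; linarith
      have hηt : η ≤ t / 4 := by
        have := min_le_right (min δ₁ δ₂) (min (y/2) (t/2))
        have := min_le_right (y/2) (t/2)
        simp only [hηdef]; linarith
      set t' := t - η with ht'def
      have ht' : t' ∈ Set.Ioo (0:ℝ) 1 := ⟨by simp only [ht'def]; linarith [ht.1],
        by simp only [ht'def]; linarith [ht.2]⟩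
      have htt' : t' < t := by simp only [ht'def]; linarith
      obtain ⟨hu'm, hTu'⟩ := H.u_mem ht'
      have hu_lt : H.u t' < y := H.u_strictMono ht' ht htt'
      have hcontr : y - H.u t' ≤ t - t' := H.u_contract ht' ht htt'.le
      have hcontr' : y - H.u t' ≤ η := by simp only [ht'def] at hcontr; linarith
      -- lower bound on μ (Ioo (u t') y)
      have hsub1 : Set.Ioo (H.u t') y ⊆ Set.Icc (0:ℝ) 1 := fun x hx =>
        ⟨le_of_lt (lt_trans hu'm.1 hx.1), le_of_lt (lt_trans (lt_trans hx.2 hym.2) H.hc1)⟩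
      have hbd1 : ∀ x ∈ Set.Ioo (H.u t') y, |h x - h y| ≤ ε := by
        intro x hx
        have hx01 : x ∈ Set.Ioc (0:ℝ) 1 := ⟨lt_trans hu'm.1 hx.1, (hsub1 hx).2⟩
        have hdist : dist x y < δ₁ := by
          rw [Real.dist_eq, abs_lt]; constructor <;> [linarith [hx.1, hx.2]; linarith [hx.2]]
        exact le_of_lt (hδ₁p hx01 hdist)
      have hsub2 : Set.Ioo t' t ⊆ Set.Icc (0:ℝ) 1 := fun x hx =>
        ⟨le_of_lt (lt_trans ht'.1 hx.1), le_of_lt (lt_trans hx.2 ht.2)⟩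
      have hbd2 : ∀ x ∈ Set.Ioo t' t, |h x - h t| ≤ ε := by
        intro x hx
        have hx01 : x ∈ Set.Ioc (0:ℝ) 1 := ⟨lt_trans ht'.1 hx.1, (hsub2 hx).2⟩
        have hdist : dist x t < δ₂ := by
          rw [Real.dist_eq, abs_lt]
          constructor <;> [simp only [ht'def] at hx; skip]
          · linarith [hx.1, hx.2]
          · linarith [hx.2]
        exact le_of_lt (hδ₂p hx01 hdist)
      have key1 := (squeeze_bounds hdens hsub1 hbd1).1
      have key2 : μ (Set.Ioo (H.u t') y) ≤ μ (Set.Ioo t' t) := (H.preim_mono hpre ht' ht).1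
      have key3 := (squeeze_bounds hdens hsub2 hbd2).2
      have key5 : t - t' ≤ M * (y - H.u t') := by
        have hge : y / 2 ≤ H.u t' := by linarith [hcontr', hηy, hu_lt]
        have := hM (H.u t') y hge hu_lt.le hym.2
        rw [hTy, hTu'] at this; linarith
      have chain : ENNReal.ofReal (h y - ε) * ENNReal.ofReal (y - H.u t') ≤
          (ENNReal.ofReal (ε * M)) * ENNReal.ofReal (y - H.u t') := by
        refine le_trans key1 (le_trans key2 (le_trans key3 ?_))
        have e1 : ENNReal.ofReal (h t + ε) ≤ ENNReal.ofReal ε :=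
          ENNReal.ofReal_le_ofReal (by linarith)
        have e2 : ENNReal.ofReal (t - t') ≤ ENNReal.ofReal (M * (y - H.u t')) :=
          ENNReal.ofReal_le_ofReal key5
        calc ENNReal.ofReal (h t + ε) * ENNReal.ofReal (t - t')
            ≤ ENNReal.ofReal ε * ENNReal.ofReal (M * (y - H.u t')) :=
              mul_le_mul' e1 e2
          _ = ENNReal.ofReal (ε * M) * ENNReal.ofReal (y - H.u t') := by
              rw [ENNReal.ofReal_mul hM0.le, ENNReal.ofReal_mul hε.le, mul_assoc]
      have hne : ENNReal.ofReal (y - H.u t') ≠ 0 := by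
        simp only [ne_eq, ENNReal.ofReal_eq_zero, not_le]; linarith
      have := (ENNReal.mul_le_mul_iff_left hne ENNReal.ofReal_ne_top).mp chain
      exact (ENNReal.ofReal_le_ofReal_iff (by positivity)).mp this
    by_contra hcon
    push_neg at hcon
    have hε : 0 < h y / (2 * (1 + M)) := by positivity
    have := main _ hε
    have hM1 : 0 < 1 + M := by linarith
    have h2 := mul_le_mul_of_nonneg_right this (by positivity : (0:ℝ) ≤ 2 * (1 + M))
    have h3 : h y / (2 * (1 + M)) * (2 * (1 + M)) = h y := by field_simp
    have h4 : h y / (2 * (1 + M)) * M * (2 * (1 + M)) = h y * M := by field_simp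
    nlinarith [h2, h3, h4, hcon, hM0, mul_pos hcon hM0]
  · -- w branch
    set y := H.w t with hy
    obtain ⟨hym, hTy⟩ := H.w_mem ht
    have hy01 : y ∈ Set.Ioc (0:ℝ) 1 := ⟨lt_trans H.hc0 hym.1, hym.2.le⟩
    have hcy : ContinuousWithinAt h (Set.Ioc 0 1) y := hhcont y hy01
    obtain ⟨M, hM0, hM⟩ := H.lipR
    have main : ∀ ε : ℝ, 0 < ε → h y - ε ≤ ε * M := by
      intro ε hε
      obtain ⟨δ₁, hδ₁, hδ₁p⟩ := Metric.continuousWithinAt_iff.mp hcy ε hε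
      obtain ⟨δ₂, hδ₂, hδ₂p⟩ := Metric.continuousWithinAt_iff.mp hct ε hε
      set η := min (min δ₁ δ₂) (t/2) / 2 with hηdef
      have hη : 0 < η := by
        apply div_pos _ (by norm_num)
        exact lt_min (lt_min hδ₁ hδ₂) (by linarith [ht.1])
      have hηδ₁ : η < δ₁ := by
        have := min_le_left (min δ₁ δ₂) (t/2)
        have := min_le_left δ₁ δ₂
        simp only [hηdef]; linarith
      have hηδ₂ : η < δ₂ := by
        have := min_le_left (min δ₁ δ₂) (t/2)
        have := min_le_right δ₁ δ₂
        simp only [hηdef]; linarith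
      have hηt : η ≤ t / 4 := by
        have := min_le_right (min δ₁ δ₂) (t/2)
        simp only [hηdef]; linarith
      set t' := t - η with ht'def
      have ht' : t' ∈ Set.Ioo (0:ℝ) 1 := ⟨by simp only [ht'def]; linarith [ht.1],
        by simp only [ht'def]; linarith [ht.2]⟩
      have htt' : t' < t := by simp only [ht'def]; linarith
      obtain ⟨hu'm, hTu'⟩ := H.w_mem ht'
      have hu_lt : H.w t' < y := H.w_strictMono ht' ht htt'
      have hcontr : y - H.w t' ≤ t - t' := H.w_contract ht' ht htt'.le
      have hcontr' : y - H.w t' ≤ η := by simp only [ht'def] at hcontr; linarith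
      have hsub1 : Set.Ioo (H.w t') y ⊆ Set.Icc (0:ℝ) 1 := fun x hx =>
        ⟨le_of_lt (lt_trans H.hc0 (lt_trans hu'm.1 hx.1)), le_of_lt (lt_trans hx.2 hym.2)⟩
      have hbd1 : ∀ x ∈ Set.Ioo (H.w t') y, |h x - h y| ≤ ε := by
        intro x hx
        have hx01 : x ∈ Set.Ioc (0:ℝ) 1 := ⟨lt_trans H.hc0 (lt_trans hu'm.1 hx.1),
          (hsub1 hx).2⟩
        have hdist : dist x y < δ₁ := by
          rw [Real.dist_eq, abs_lt]; constructor <;> [linarith [hx.1, hx.2]; linarith [hx.2]]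
        exact le_of_lt (hδ₁p hx01 hdist)
      have hsub2 : Set.Ioo t' t ⊆ Set.Icc (0:ℝ) 1 := fun x hx =>
        ⟨le_of_lt (lt_trans ht'.1 hx.1), le_of_lt (lt_trans hx.2 ht.2)⟩
      have hbd2 : ∀ x ∈ Set.Ioo t' t, |h x - h t| ≤ ε := by
        intro x hx
        have hx01 : x ∈ Set.Ioc (0:ℝ) 1 := ⟨lt_trans ht'.1 hx.1, (hsub2 hx).2⟩
        have hdist : dist x t < δ₂ := by
          rw [Real.dist_eq, abs_lt]
          constructor
          · simp only [ht'def] at hx; linarith [hx.1, hx.2]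
          · linarith [hx.2]
        exact le_of_lt (hδ₂p hx01 hdist)
      have key1 := (squeeze_bounds hdens hsub1 hbd1).1
      have key2 : μ (Set.Ioo (H.w t') y) ≤ μ (Set.Ioo t' t) := (H.preim_mono hpre ht' ht).2
      have key3 := (squeeze_bounds hdens hsub2 hbd2).2
      have key5 : t - t' ≤ M * (y - H.w t') := by
        have := hM (H.w t') y hu'm.1 hu_lt.le hym.2
        rw [hTy, hTu'] at this; linarith
      have chain : ENNReal.ofReal (h y - ε) * ENNReal.ofReal (y - H.w t') ≤
          (ENNReal.ofReal (ε * M)) * ENNReal.ofReal (y - H.w t') := by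
        refine le_trans key1 (le_trans key2 (le_trans key3 ?_))
        have e1 : ENNReal.ofReal (h t + ε) ≤ ENNReal.ofReal ε :=
          ENNReal.ofReal_le_ofReal (by linarith)
        have e2 : ENNReal.ofReal (t - t') ≤ ENNReal.ofReal (M * (y - H.w t')) :=
          ENNReal.ofReal_le_ofReal key5
        calc ENNReal.ofReal (h t + ε) * ENNReal.ofReal (t - t')
            ≤ ENNReal.ofReal ε * ENNReal.ofReal (M * (y - H.w t')) :=
              mul_le_mul' e1 e2
          _ = ENNReal.ofReal (ε * M) * ENNReal.ofReal (y - H.w t') := by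
              rw [ENNReal.ofReal_mul hM0.le, ENNReal.ofReal_mul hε.le, mul_assoc]
      have hne : ENNReal.ofReal (y - H.w t') ≠ 0 := by
        simp only [ne_eq, ENNReal.ofReal_eq_zero, not_le]; linarith
      have := (ENNReal.mul_le_mul_iff_left hne ENNReal.ofReal_ne_top).mp chain
      exact (ENNReal.ofReal_le_ofReal_iff (by positivity)).mp this
    by_contra hcon
    push_neg at hcon
    have hε : 0 < h y / (2 * (1 + M)) := by positivity
    have := main _ hε
    have hM1 : 0 < 1 + M := by linarith
    have h2 := mul_le_mul_of_nonneg_right this (by positivity : (0:ℝ) ≤ 2 * (1 + M))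
    have h3 : h y / (2 * (1 + M)) * (2 * (1 + M)) = h y := by field_simp
    have h4 : h y / (2 * (1 + M)) * M * (2 * (1 + M)) = h y * M := by field_simp
    nlinarith [h2, h3, h4, hcon, hM0, mul_pos hcon hM0]

lemma DynCtx.h_c_pos {c : ℝ} {T : ℝ → ℝ} (H : DynCtx c T) {μ : Measure ℝ}
    [IsProbabilityMeasure μ] {h : ℝ → ℝ}
    (hdens : μ = (volume.restrict (Set.Icc (0:ℝ) 1)).withDensity
      (fun x => ENNReal.ofReal (h x)))
    (hhcont : ContinuousOn h (Set.Ioc 0 1))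
    (hpre : ∀ A : Set ℝ, MeasurableSet A → μ (T ⁻¹' A) = μ A) :
    0 < h c := by
  by_contra hle
  push_neg at hle
  obtain ⟨x₁, hx₁, hhx₁⟩ := pos_somewhere (μ := μ) hdens
  have hcx : ContinuousWithinAt h (Set.Ioc 0 1) x₁ := hhcont x₁ ⟨hx₁.1, hx₁.2.le⟩
  obtain ⟨δ, hδ, hδp⟩ := Metric.continuousWithinAt_iff.mp hcx (h x₁) hhx₁
  set p := max (x₁ - δ/2) (x₁/2) with hpdef
  have hp : 0 < p := lt_of_lt_of_le (by linarith [hx₁.1]) (le_max_right _ _)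
  have hpq : p < x₁ := max_lt (by linarith) (by linarith [hx₁.1])
  have hpos : ∀ x ∈ Set.Icc p x₁, 0 < h x := by
    intro x hx
    have hx01 : x ∈ Set.Ioc (0:ℝ) 1 := ⟨lt_of_lt_of_le hp hx.1, le_trans hx.2 hx₁.2.le⟩
    have hdist : dist x x₁ < δ := by
      rw [Real.dist_eq, abs_lt]
      have h1 : x₁ - δ/2 ≤ p := le_max_left _ _
      constructor <;> linarith [hx.1, hx.2]
    have := hδp hx01 hdist
    rw [Real.dist_eq, abs_lt] at this
    linarith [this.1]
  obtain ⟨z, hz, m, hQ⟩ := H.hit hp hpq hx₁.2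
  have hex : ∃ m, (∀ j < m, T^[j] z ∈ Set.Ioo 0 1) ∧ T^[m] z = c := ⟨m, hQ⟩
  classical
  set m₀ := Nat.find hex with hm₀
  have hspec := Nat.find_spec hex
  have claim : ∀ i, i ≤ m₀ → h (T^[m₀ - i] z) ≤ 0 := by
    intro i
    induction i with
    | zero => intro _; rw [Nat.sub_zero, hspec.2]; exact hle
    | succ i ih =>
      intro hi1
      have hj : m₀ - (i+1) < m₀ := by omega
      have hy : T^[m₀ - (i+1)] z ∈ Set.Ioo 0 1 := hspec.1 _ hj
      have hyne : T^[m₀ - (i+1)] z ≠ c := by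
        intro hcq
        exact Nat.find_min hex hj ⟨fun j' hj' => hspec.1 j' (lt_trans hj' hj), hcq⟩
      have harith : m₀ - (i+1) + 1 = m₀ - i := by omega
      have hTy : T (T^[m₀ - (i+1)] z) = T^[m₀ - i] z := by
        rw [← harith]
        exact (Function.iterate_succ_apply' T (m₀ - (i+1)) z).symm
      have hy'le : h (T^[m₀ - i] z) ≤ 0 := ih (by omega)
      have hy'm : T^[m₀ - i] z ∈ Set.Ioo 0 1 := by
        rcases Nat.eq_zero_or_pos i with rfl | hipos
        · rw [Nat.sub_zero, hspec.2]; exact ⟨H.hc0, H.hc1⟩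
        · exact hspec.1 _ (by omega)
      have hZP := H.zero_prop hdens hhcont hpre hy'm hy'le
      rcases lt_or_gt_of_ne hyne with hlt | hgt
      · have hym : T^[m₀ - (i+1)] z ∈ Set.Ioo 0 c := ⟨hy.1, hlt⟩
        have hu := H.u_mem hy'm
        have heq : T^[m₀ - (i+1)] z = H.u (T^[m₀ - i] z) := by
          apply H.mono₁.injOn hym hu.1
          rw [hTy, hu.2]
        rw [heq]; exact hZP.1
      · have hym : T^[m₀ - (i+1)] z ∈ Set.Ioo c 1 := ⟨hgt, hy.2⟩
        have hw := H.w_mem hy'm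
        have heq : T^[m₀ - (i+1)] z = H.w (T^[m₀ - i] z) := by
          apply H.mono₂.injOn hym hw.1
          rw [hTy, hw.2]
        rw [heq]; exact hZP.2
  have hfin := claim m₀ (le_refl m₀)
  rw [Nat.sub_self] at hfin
  simp only [Function.iterate_zero_apply] at hfin
  exact absurd (hpos z hz) (not_lt.mpr hfin)

lemma mvt_lb {f : ℝ → ℝ} {a b lo : ℝ}
    (hcont : ContinuousOn f (Set.Icc a b))
    (hder : ∀ x ∈ Set.Ioo a b, ∃ d, 0=0 ∧ HasDerivAt f d x ∧ lo ≤ d)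
    {x y : ℝ} (hx : x ∈ Set.Icc a b) (hy : y ∈ Set.Icc a b) (hxy : x ≤ y) :
    lo * (y - x) ≤ f y - f x := by
  have hdiff : DifferentiableOn ℝ f (interior (Set.Icc a b)) := by
    rw [interior_Icc]
    exact fun z hz => ((hder z hz).choose_spec.2.1).differentiableAt.differentiableWithinAt
  have hlo : ∀ z ∈ interior (Set.Icc a b), lo ≤ deriv f z := by
    rw [interior_Icc]; intro z hz
    obtain ⟨d, _, hd, h1⟩ := hder z hz
    rw [hd.deriv]; exact h1
  exact (convex_Icc a b).mul_sub_le_image_sub_of_le_deriv hcont hdiff hlo x hx y hy hxy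

lemma mvt_ub {f : ℝ → ℝ} {a b hi : ℝ}
    (hcont : ContinuousOn f (Set.Icc a b))
    (hder : ∀ x ∈ Set.Ioo a b, ∃ d, 0=0 ∧ HasDerivAt f d x ∧ d ≤ hi)
    {x y : ℝ} (hx : x ∈ Set.Icc a b) (hy : y ∈ Set.Icc a b) (hxy : x ≤ y) :
    f y - f x ≤ hi * (y - x) := by
  have hdiff : DifferentiableOn ℝ f (interior (Set.Icc a b)) := by
    rw [interior_Icc]
    exact fun z hz => ((hder z hz).choose_spec.2.1).differentiableAt.differentiableWithinAt
  have hhi : ∀ z ∈ interior (Set.Icc a b), deriv f z ≤ hi := by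
    rw [interior_Icc]; intro z hz
    obtain ⟨d, _, hd, h1⟩ := hder z hz
    rw [hd.deriv]; exact h1
  exact (convex_Icc a b).image_sub_le_mul_sub_of_deriv_le hcont hdiff hhi x hx y hy hxy

lemma DynCtx.step {c : ℝ} {T : ℝ → ℝ} (H : DynCtx c T) {μ : Measure ℝ}
    (hpre : ∀ A : Set ℝ, MeasurableSet A → μ (T ⁻¹' A) = μ A)
    {s : ℝ} (hs : s ∈ Set.Ioo (0:ℝ) 1) :
    μ (Set.Ioo 0 (H.u s)) + μ (Set.Ioo c (H.w s)) ≤ μ (Set.Ioo 0 s) := by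
  obtain ⟨hum, hTu⟩ := H.u_mem hs
  obtain ⟨hwm, hTw⟩ := H.w_mem hs
  have hdisj : Disjoint (Set.Ioo (0:ℝ) (H.u s)) (Set.Ioo c (H.w s)) := by
    rw [Set.disjoint_left]
    intro x hx1 hx2
    exact absurd (lt_trans hx1.2 hum.2) (not_lt.mpr hx2.1.le)
  have hsub : Set.Ioo (0:ℝ) (H.u s) ∪ Set.Ioo c (H.w s) ⊆ T ⁻¹' (Set.Ioo 0 s) := by
    rintro x (hx | hx)
    · have hxm : x ∈ Set.Ioo 0 c := ⟨hx.1, lt_trans hx.2 hum.2⟩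
      have h1 := H.mapsL x hxm
      have h2 := H.mono₁ hxm hum hx.2
      rw [hTu] at h2
      exact ⟨h1.1, h2⟩
    · have hxm : x ∈ Set.Ioo c 1 := ⟨hx.1, lt_trans hx.2 hwm.2⟩
      have h1 := H.mapsR x hxm
      have h2 := H.mono₂ hxm hwm hx.2
      rw [hTw] at h2
      exact ⟨h1.1, h2⟩
  calc μ (Set.Ioo 0 (H.u s)) + μ (Set.Ioo c (H.w s))
      = μ (Set.Ioo 0 (H.u s) ∪ Set.Ioo c (H.w s)) :=
        (measure_union hdisj measurableSet_Ioo).symm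
    _ ≤ μ (T ⁻¹' (Set.Ioo 0 s)) := measure_mono hsub
    _ = μ (Set.Ioo 0 s) := hpre _ measurableSet_Ioo

lemma DynCtx.iter_mem {c : ℝ} {T : ℝ → ℝ} (H : DynCtx c T) :
    ∀ j, ∀ s ∈ Set.Ioo (0:ℝ) 1, (H.u)^[j] s ∈ Set.Ioo (0:ℝ) 1 := by
  intro j
  induction j with
  | zero => intro s hs; simpa using hs
  | succ j ih =>
    intro s hs
    rw [Function.iterate_succ_apply]
    have := (H.u_mem hs).1
    exact ih _ ⟨this.1, lt_trans this.2 H.hc1⟩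

lemma DynCtx.sum_le {c : ℝ} {T : ℝ → ℝ} (H : DynCtx c T) {μ : Measure ℝ}
    (hpre : ∀ A : Set ℝ, MeasurableSet A → μ (T ⁻¹' A) = μ A) :
    ∀ N : ℕ, ∀ s ∈ Set.Ioo (0:ℝ) 1,
      (∑ j ∈ Finset.range N, μ (Set.Ioo c (H.w ((H.u)^[j] s)))) ≤ μ (Set.Ioo 0 s) := by
  intro N
  induction N with
  | zero => intro s _; simp
  | succ N ih =>
    intro s hs
    have hus : H.u s ∈ Set.Ioo (0:ℝ) 1 := by
      have := (H.u_mem hs).1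
      exact ⟨this.1, lt_trans this.2 H.hc1⟩
    have h1 : (∑ j ∈ Finset.range (N+1), μ (Set.Ioo c (H.w ((H.u)^[j] s))))
        = (∑ j ∈ Finset.range N, μ (Set.Ioo c (H.w ((H.u)^[j] (H.u s)))))
          + μ (Set.Ioo c (H.w s)) := by
      rw [Finset.sum_range_succ']
      simp [Function.iterate_succ_apply]
    rw [h1]
    calc _ ≤ μ (Set.Ioo 0 (H.u s)) + μ (Set.Ioo c (H.w s)) :=
          add_le_add_left (ih _ hus) _
      _ ≤ μ (Set.Ioo 0 s) := H.step hpre hs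

lemma aux_div {a b C : ℝ} (hb : b ≠ 0) : a / b * (b / C) = a / C := by
  rw [div_mul_div_comm, mul_comm a b, mul_div_mul_left _ _ hb]

lemma DynCtx.tendstoT0 {c : ℝ} {T : ℝ → ℝ} (H : DynCtx c T) :
    Tendsto T (𝓝[>] (0:ℝ)) (𝓝 0) :=
  tendsto_right_of_image H.hc0 zero_lt_one H.mono₁ H.imgL

lemma DynCtx.u_ratio {c : ℝ} {T : ℝ → ℝ} (H : DynCtx c T) {T₁ : ℝ → ℝ}
    (h1ext : Set.EqOn T₁ T (Set.Ioo 0 c))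
    (h1C2 : ContDiffOn ℝ 2 T₁ (Set.Ioc 0 c))
    (hneutral : Tendsto (derivWithin T₁ (Set.Ioc 0 c)) (𝓝[>] (0:ℝ)) (𝓝 1)) :
    Tendsto (fun s => H.u s / s) (𝓝[>] (0:ℝ)) (𝓝 1) := by
  have hIooc : Set.Ioo (0:ℝ) c ∈ 𝓝[>] (0:ℝ) :=
    Ioo_mem_nhdsGT_of_mem ⟨le_refl _, H.hc0⟩
  have hT₁0 : Tendsto T₁ (𝓝[>] (0:ℝ)) (𝓝 0) := by
    refine H.tendstoT0.congr' ?_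
    filter_upwards [hIooc] with x hx
    exact (h1ext hx).symm
  rw [Metric.tendsto_nhds]
  intro ε hε
  obtain ⟨δ₁, hδ₁, hδ₁p⟩ := Metric.tendsto_nhdsWithin_nhds.mp hneutral ε hε
  set δ' := min δ₁ c with hδ'def
  have hδ' : 0 < δ' := lt_min hδ₁ H.hc0
  have hδ'c : δ' ≤ c := min_le_right _ _
  have claim : ∀ y ∈ Set.Ioo (0:ℝ) δ', T₁ y ≤ (1 + ε) * y := by
    intro y hy
    have hyc : y ∈ Set.Ioo 0 c := ⟨hy.1, lt_of_lt_of_le hy.2 hδ'c⟩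
    have hub : ∀ y' ∈ Set.Ioo (0:ℝ) y, T₁ y - T₁ y' ≤ (1 + ε) * (y - y') := by
      intro y' hy'
      have hIccsub : Set.Icc y' y ⊆ Set.Ioc 0 c := fun x hx =>
        ⟨lt_of_lt_of_le hy'.1 hx.1, le_trans hx.2 hyc.2.le⟩
      refine mvt_ub (h1C2.continuousOn.mono hIccsub) ?_ ⟨le_refl y', hy'.2.le⟩
        ⟨hy'.2.le, le_refl y⟩ hy'.2.le
      intro z hz
      have hzc : z ∈ Set.Ioo 0 c := ⟨lt_trans hy'.1 hz.1, lt_trans hz.2 hyc.2⟩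
      refine ⟨derivWithin T₁ (Set.Ioc 0 c) z, rfl,
        hasDerivAt_of_extension isOpen_Ioo Set.Ioo_subset_Ioc_self (fun _ _ => rfl) h1C2 hzc,
        ?_⟩
      have hzδ : dist z 0 < δ₁ := by
        rw [Real.dist_eq, sub_zero, abs_of_pos hzc.1]
        exact lt_of_lt_of_le (lt_trans hz.2 hy.2) (min_le_left _ _)
      have := hδ₁p hzc.1 hzδ
      rw [Real.dist_eq, abs_lt] at this
      linarith [this.2]
    have h1 : Tendsto (fun y' => T₁ y - T₁ y') (𝓝[>] (0:ℝ)) (𝓝 (T₁ y - 0)) :=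
      tendsto_const_nhds.sub hT₁0
    have h2 : Tendsto (fun y' => (1 + ε) * (y - y')) (𝓝[>] (0:ℝ)) (𝓝 ((1 + ε) * (y - 0))) :=
      tendsto_const_nhds.mul (tendsto_const_nhds.sub (tendsto_id.mono_left nhdsWithin_le_nhds))
    have h3 : T₁ y - 0 ≤ (1 + ε) * (y - 0) := by
      refine le_of_tendsto_of_tendsto h1 h2 ?_
      filter_upwards [Ioo_mem_nhdsGT_of_mem ⟨le_refl (0:ℝ), hy.1⟩] with y' hy'
      exact hub y' hy'
    linarith [h3]
  have hmem : Set.Ioo (0:ℝ) δ' ∈ 𝓝[>] (0:ℝ) := Ioo_mem_nhdsGT_of_mem ⟨le_refl _, hδ'⟩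
  filter_upwards [hmem] with s hs
  have hs01 : s ∈ Set.Ioo (0:ℝ) 1 :=
    ⟨hs.1, lt_of_lt_of_le (lt_of_lt_of_le hs.2 hδ'c) H.hc1.le⟩
  obtain ⟨hum, hTu⟩ := H.u_mem hs01
  have hult : H.u s < s := H.u_lt_self hs01
  have husδ : H.u s ∈ Set.Ioo (0:ℝ) δ' := ⟨hum.1, lt_trans hult hs.2⟩
  have hkey : s ≤ (1 + ε) * H.u s := by
    have := claim _ husδ
    rw [h1ext hum, hTu] at this
    exact this
  set r := H.u s / s with hrdef
  have hr1 : r < 1 := (div_lt_one hs.1).mpr hult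
  have hrge : 1 ≤ (1 + ε) * r := by
    rw [hrdef, mul_div_assoc']
    rw [le_div_iff₀ hs.1]
    linarith
  rw [Real.dist_eq, abs_lt]
  constructor
  · nlinarith
  · linarith

lemma DynCtx.u_tendsto0 {c : ℝ} {T : ℝ → ℝ} (H : DynCtx c T) :
    Tendsto H.u (𝓝[>] (0:ℝ)) (𝓝[>] (0:ℝ)) := by
  have hmem : Set.Ioo (0:ℝ) 1 ∈ 𝓝[>] (0:ℝ) :=
    Ioo_mem_nhdsGT_of_mem ⟨le_refl _, zero_lt_one⟩
  have h0 : Tendsto H.u (𝓝[>] (0:ℝ)) (𝓝 0) := by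
    refine tendsto_of_tendsto_of_tendsto_of_le_of_le'
      (tendsto_const_nhds : Tendsto (fun _ : ℝ => (0:ℝ)) _ _)
      (tendsto_id.mono_left nhdsWithin_le_nhds) ?_ ?_
    · filter_upwards [hmem] with s hs
      exact (H.u_mem hs).1.1.le
    · filter_upwards [hmem] with s hs
      exact (H.u_lt_self hs).le
  refine tendsto_nhdsWithin_of_tendsto_nhds_of_eventually_within _ h0 ?_
  filter_upwards [hmem] with s hs
  exact (H.u_mem hs).1.1

lemma DynCtx.u_iter_ratio {c : ℝ} {T : ℝ → ℝ} (H : DynCtx c T) {T₁ : ℝ → ℝ}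
    (h1ext : Set.EqOn T₁ T (Set.Ioo 0 c))
    (h1C2 : ContDiffOn ℝ 2 T₁ (Set.Ioc 0 c))
    (hneutral : Tendsto (derivWithin T₁ (Set.Ioc 0 c)) (𝓝[>] (0:ℝ)) (𝓝 1)) :
    ∀ j : ℕ, Tendsto (fun s => (H.u)^[j] s / s) (𝓝[>] (0:ℝ)) (𝓝 1) ∧
      Tendsto ((H.u)^[j]) (𝓝[>] (0:ℝ)) (𝓝[>] (0:ℝ)) := by
  intro j
  induction j with
  | zero =>
    constructor
    · refine Tendsto.congr' ?_ (tendsto_const_nhds : Tendsto (fun _ : ℝ => (1:ℝ)) _ _)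
      filter_upwards [self_mem_nhdsWithin] with s hs
      rw [Function.iterate_zero_apply, div_self (ne_of_gt hs)]
    · simpa using tendsto_id
  | succ j ih =>
    constructor
    · have hprod : Tendsto (fun s => ((H.u)^[j] (H.u s) / (H.u s)) * (H.u s / s))
          (𝓝[>] (0:ℝ)) (𝓝 (1 * 1)) :=
        ((ih.1).comp H.u_tendsto0).mul (H.u_ratio h1ext h1C2 hneutral)
      rw [mul_one] at hprod
      refine Tendsto.congr' ?_ hprod
      filter_upwards [Ioo_mem_nhdsGT_of_mem ⟨le_refl (0:ℝ), zero_lt_one⟩] with s hs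
      rw [aux_div (ne_of_gt (H.u_mem hs).1.1), Function.iterate_succ_apply]
    · have := (ih.2).comp H.u_tendsto0
      refine Tendsto.congr ?_ this
      intro s
      rw [Function.comp_apply, Function.iterate_succ_apply]

lemma DynCtx.ratio_tendsto {c : ℝ} {T : ℝ → ℝ} (H : DynCtx c T) {μ : Measure ℝ} {h : ℝ → ℝ}
    (hdens : μ = (volume.restrict (Set.Icc (0:ℝ) 1)).withDensity
      (fun x => ENNReal.ofReal (h x)))
    (hhcont : ContinuousOn h (Set.Ioc 0 1)) {T₂ : ℝ → ℝ}
    (h2ext : Set.EqOn T₂ T (Set.Ioo c 1))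
    (hder : HasDerivWithinAt T₂ (derivWithin T₂ (Set.Icc c 1) c) (Set.Icc c 1) c)
    (hT₂c : T₂ c = 0) (hD : 0 < derivWithin T₂ (Set.Icc c 1) c) (hhc : 0 < h c) :
    Tendsto (fun s => (μ (Set.Ioo c (H.w s))).toReal / s) (𝓝[>] (0:ℝ))
      (𝓝 (h c / derivWithin T₂ (Set.Icc c 1) c)) := by
  set D := derivWithin T₂ (Set.Icc c 1) c with hDdef
  have hmem : Set.Ioo (0:ℝ) 1 ∈ 𝓝[>] (0:ℝ) :=
    Ioo_mem_nhdsGT_of_mem ⟨le_refl _, zero_lt_one⟩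
  -- A: w s → c
  have hw0 : Tendsto H.w (𝓝[>] (0:ℝ)) (𝓝 c) := by
    rw [Metric.tendsto_nhds]
    intro η hη
    set c' := min (c + η) ((c + 1) / 2) with hc'def
    have hcc' : c < c' := lt_min (by linarith) (by linarith [H.hc1])
    have hc'1 : c' < 1 := lt_of_le_of_lt (min_le_right _ _) (by linarith [H.hc1])
    have hc'm : c' ∈ Set.Ioo c 1 := ⟨hcc', hc'1⟩
    have hTc' := H.mapsR c' hc'm
    have hmem2 : Set.Ioo (0:ℝ) (T c') ∈ 𝓝[>] (0:ℝ) :=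
      Ioo_mem_nhdsGT_of_mem ⟨le_refl _, hTc'.1⟩
    filter_upwards [hmem2] with s hs
    have hs01 : s ∈ Set.Ioo (0:ℝ) 1 := ⟨hs.1, lt_trans hs.2 hTc'.2⟩
    obtain ⟨hwm, hTw⟩ := H.w_mem hs01
    have hlt : H.w s < c' := by
      have : T (H.w s) < T c' := by rw [hTw]; exact hs.2
      exact (H.mono₂.lt_iff_lt hwm hc'm).mp this
    rw [Real.dist_eq, abs_lt]
    constructor
    · linarith [hwm.1]
    · have : c' ≤ c + η := min_le_left _ _
      linarith
  -- B: within version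
  have hwW : Tendsto H.w (𝓝[>] (0:ℝ)) (𝓝[Set.Icc c 1 \ {c}] c) := by
    refine tendsto_nhdsWithin_of_tendsto_nhds_of_eventually_within _ hw0 ?_
    filter_upwards [hmem] with s hs
    obtain ⟨hwm, _⟩ := H.w_mem hs
    exact ⟨⟨hwm.1.le, hwm.2.le⟩, ne_of_gt hwm.1⟩
  -- C: slope limits
  have hslope := hasDerivWithinAt_iff_tendsto_slope.mp hder
  have h1 : Tendsto (fun s => slope T₂ c (H.w s)) (𝓝[>] (0:ℝ)) (𝓝 D) := hslope.comp hwW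
  have h2 : Tendsto (fun s => s / (H.w s - c)) (𝓝[>] (0:ℝ)) (𝓝 D) := by
    refine Tendsto.congr' ?_ h1
    filter_upwards [hmem] with s hs
    obtain ⟨hwm, hTw⟩ := H.w_mem hs
    rw [slope_def_field, hT₂c, h2ext hwm, hTw, sub_zero]
  have h3 : Tendsto (fun s => (H.w s - c) / s) (𝓝[>] (0:ℝ)) (𝓝 D⁻¹) := by
    have := h2.inv₀ (ne_of_gt hD)
    refine Tendsto.congr ?_ this
    intro s
    rw [inv_div]
  -- D: density ratio
  have h4 : Tendsto (fun s => (μ (Set.Ioo c (H.w s))).toReal / (H.w s - c)) (𝓝[>] (0:ℝ))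
      (𝓝 (h c)) := by
    rw [Metric.tendsto_nhds]
    intro ε hε
    set ε' := min ε (h c) / 2 with hε'def
    have hε' : 0 < ε' := by
      apply div_pos _ (by norm_num); exact lt_min hε hhc
    have hε'ε : ε' < ε := by
      have := min_le_left ε (h c); simp only [hε'def]; linarith
    have hε'hc : ε' < h c := by
      have := min_le_right ε (h c); simp only [hε'def]; linarith
    have hcc : ContinuousWithinAt h (Set.Ioc 0 1) c := hhcont c ⟨H.hc0, H.hc1.le⟩
    obtain ⟨δ, hδ, hδp⟩ := Metric.continuousWithinAt_iff.mp hcc ε' hε'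
    filter_upwards [hmem, (Metric.tendsto_nhds.mp hw0) δ hδ] with s hs hsδ
    obtain ⟨hwm, hTw⟩ := H.w_mem hs
    have hwc : 0 < H.w s - c := sub_pos.mpr hwm.1
    have hsub : Set.Ioo c (H.w s) ⊆ Set.Icc (0:ℝ) 1 := fun x hx =>
      ⟨le_of_lt (lt_trans H.hc0 hx.1), le_of_lt (lt_trans hx.2 hwm.2)⟩
    have hbd : ∀ x ∈ Set.Ioo c (H.w s), |h x - h c| ≤ ε' := by
      intro x hx
      have hx01 : x ∈ Set.Ioc (0:ℝ) 1 := ⟨lt_trans H.hc0 hx.1, (hsub hx).2⟩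
      have hdist : dist x c < δ := by
        rw [Real.dist_eq, abs_lt]
        rw [Real.dist_eq, abs_lt] at hsδ
        constructor <;> [linarith [hx.1]; linarith [hx.2, hsδ.1, hsδ.2]]
      exact le_of_lt (hδp hx01 hdist)
    obtain ⟨hlow, hup⟩ := squeeze_bounds hdens hsub hbd
    have hBne : ENNReal.ofReal (h c + ε') * ENNReal.ofReal (H.w s - c) ≠ ⊤ :=
      ENNReal.mul_ne_top ENNReal.ofReal_ne_top ENNReal.ofReal_ne_top
    have hmfin : μ (Set.Ioo c (H.w s)) ≠ ⊤ := ne_top_of_le_ne_top hBne hup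
    have hupR : (μ (Set.Ioo c (H.w s))).toReal ≤ (h c + ε') * (H.w s - c) := by
      have := ENNReal.toReal_mono hBne hup
      rwa [← ENNReal.ofReal_mul (by linarith), ENNReal.toReal_ofReal
        (by nlinarith)] at this
    have hlowR : (h c - ε') * (H.w s - c) ≤ (μ (Set.Ioo c (H.w s))).toReal := by
      have := ENNReal.toReal_mono hmfin hlow
      rwa [← ENNReal.ofReal_mul (by linarith), ENNReal.toReal_ofReal
        (by nlinarith)] at this
    rw [Real.dist_eq, abs_lt]
    have hd1 : h c - ε' ≤ (μ (Set.Ioo c (H.w s))).toReal / (H.w s - c) :=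
      (le_div_iff₀ hwc).mpr hlowR
    have hd2 : (μ (Set.Ioo c (H.w s))).toReal / (H.w s - c) ≤ h c + ε' :=
      (div_le_iff₀ hwc).mpr hupR
    constructor <;> [linarith; linarith]
  -- E: combine
  have hfinal := h4.mul h3
  rw [← div_eq_mul_inv] at hfinal
  refine Tendsto.congr' ?_ hfinal
  filter_upwards [hmem] with s hs
  obtain ⟨hwm, _⟩ := H.w_mem hs
  rw [aux_div (ne_of_gt (sub_pos.mpr hwm.1))]

/-- **Asymptotics of `μ(E'_k)` at a neutral fixed point.**
In the intermittent-map setting (two increasing full branches, uniformly expanding `C²`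
right branch, `C²` left branch with indifferent fixed point at `0`), with unique
invariant probability `μ ≪ λ` having continuous density `h` on `(0,1]`: for intervals
`E_k ∋ 0` with `λ(E_k) → 0` and `E'_k := (c,1) ∩ T⁻¹E_k`, one has
`μ(E'_k) ∼ (h(c)/T'(c⁺)) · λ(E_k)` and `μ(E'_k) = o(μ(E_k))` as `k → ∞`. -/
theorem stmt18 {c : ℝ} (hc : c ∈ Set.Ioo (0 : ℝ) 1) {T : ℝ → ℝ}
    (hmaps : Set.MapsTo T (Set.Icc (0:ℝ) 1) (Set.Icc (0:ℝ) 1))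
    (hmono₁ : StrictMonoOn T (Set.Ioo 0 c)) (hmono₂ : StrictMonoOn T (Set.Ioo c 1))
    (himg₁ : T '' Set.Ioo 0 c = Set.Ioo 0 1) (himg₂ : T '' Set.Ioo c 1 = Set.Ioo 0 1)
    (T₂ : ℝ → ℝ) (h2ext : Set.EqOn T₂ T (Set.Ioo c 1))
    (h2C2 : ContDiffOn ℝ 2 T₂ (Set.Icc c 1))
    (h2exp : ∃ ρ : ℝ, 1 < ρ ∧ ∀ x ∈ Set.Icc c 1, ρ ≤ derivWithin T₂ (Set.Icc c 1) x)
    (T₁ : ℝ → ℝ) (h1ext : Set.EqOn T₁ T (Set.Ioo 0 c))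
    (h1C2 : ContDiffOn ℝ 2 T₁ (Set.Ioc 0 c))
    (h1exp : ∀ ε : ℝ, 0 < ε → ε ≤ c →
      ∃ ρ : ℝ, 1 < ρ ∧ ∀ x ∈ Set.Icc ε c, ρ ≤ derivWithin T₁ (Set.Ioc 0 c) x)
    (hfix : T 0 = 0)
    (hneutral : Tendsto (derivWithin T₁ (Set.Ioc 0 c)) (𝓝[>] (0:ℝ)) (𝓝 1))
    (hTinc : ∃ δ : ℝ, 0 < δ ∧
      MonotoneOn (derivWithin T₁ (Set.Ioc 0 c)) (Set.Ioo 0 δ))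
    (μ : Measure ℝ) [IsProbabilityMeasure μ] (hac : μ ≪ volume)
    (hsupp : μ (Set.Icc (0:ℝ) 1)ᶜ = 0) (hinv : MeasurePreserving T μ μ)
    (huniq : ∀ μ' : Measure ℝ, IsProbabilityMeasure μ' → μ' ≪ volume →
      μ' (Set.Icc (0:ℝ) 1)ᶜ = 0 → MeasurePreserving T μ' μ' → μ' = μ)
    (h : ℝ → ℝ) (hhcont : ContinuousOn h (Set.Ioc 0 1))
    (hdens : μ = (volume.restrict (Set.Icc (0:ℝ) 1)).withDensity
      (fun x => ENNReal.ofReal (h x)))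
    (E : ℕ → Set ℝ) (hEm : ∀ k, MeasurableSet (E k)) (hEi : ∀ k, (E k).OrdConnected)
    (hE0 : ∀ k, (0 : ℝ) ∈ E k) (hEsub : ∀ k, E k ⊆ Set.Icc 0 1)
    (hEpos : ∀ k, 0 < volume (E k))
    (hEsmall : Tendsto (fun k => volume (E k)) atTop (𝓝 0)) :
    Tendsto (fun k =>
        (μ (Set.Ioo c 1 ∩ T ⁻¹' (E k))).toReal /
          (h c / derivWithin T₂ (Set.Icc c 1) c * (volume (E k)).toReal))
      atTop (𝓝 1) ∧
    Tendsto (fun k =>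
        (μ (Set.Ioo c 1 ∩ T ⁻¹' (E k))).toReal / (μ (E k)).toReal)
      atTop (𝓝 0) := by
  
  obtain ⟨hc0, hc1⟩ := hc
  have mapsL : ∀ x ∈ Set.Ioo (0:ℝ) c, T x ∈ Set.Ioo (0:ℝ) 1 := fun x hx =>
    himg₁ ▸ Set.mem_image_of_mem T hx
  have mapsR : ∀ x ∈ Set.Ioo c 1, T x ∈ Set.Ioo (0:ℝ) 1 := fun x hx =>
    himg₂ ▸ Set.mem_image_of_mem T hx
  have contL : ContinuousOn T (Set.Ioo 0 c) :=
    (h1C2.continuousOn.mono Set.Ioo_subset_Ioc_self).congr h1ext.symm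
  have contR : ContinuousOn T (Set.Ioo c 1) :=
    (h2C2.continuousOn.mono Set.Ioo_subset_Icc_self).congr h2ext.symm
  have growL : ∀ a ∈ Set.Ioo (0:ℝ) c, ∃ ρ > 1, ∀ x y, a ≤ x → x ≤ y → y < c →
      ρ * (y - x) ≤ T y - T x := by
    intro a ha
    obtain ⟨ρ, hρ, hbd⟩ := h1exp a ha.1 ha.2.le
    refine ⟨ρ, hρ, fun x y hax hxy hyc => ?_⟩
    have hx : x ∈ Set.Ioo 0 c := ⟨lt_of_lt_of_le ha.1 hax, lt_of_le_of_lt hxy hyc⟩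
    have hy : y ∈ Set.Ioo 0 c := ⟨lt_of_lt_of_le hx.1 hxy, hyc⟩
    have hmv : ρ * (y - x) ≤ T₁ y - T₁ x := by
      refine mvt_lb (h1C2.continuousOn.mono ?_) ?_ (Set.left_mem_Icc.mpr hxy)
        (Set.right_mem_Icc.mpr hxy) hxy
      · intro z hz; exact ⟨lt_of_lt_of_le hx.1 hz.1, le_trans hz.2 hyc.le⟩
      · intro z hz
        have hz' : z ∈ Set.Ioo 0 c := ⟨lt_trans hx.1 hz.1, lt_trans hz.2 hyc⟩
        exact ⟨_, rfl,
          hasDerivAt_of_extension isOpen_Ioo Set.Ioo_subset_Ioc_self (fun _ _ => rfl) h1C2 hz',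
          hbd z ⟨le_trans hax hz.1.le, le_trans hz.2.le hyc.le⟩⟩
    rwa [h1ext hx, h1ext hy] at hmv
  have growR : ∃ ρ > 1, ∀ x y, c < x → x ≤ y → y < 1 → ρ * (y - x) ≤ T y - T x := by
    obtain ⟨ρ, hρ, hbd⟩ := h2exp
    refine ⟨ρ, hρ, fun x y hcx hxy hy1 => ?_⟩
    have hx : x ∈ Set.Ioo c 1 := ⟨hcx, lt_of_le_of_lt hxy hy1⟩
    have hy : y ∈ Set.Ioo c 1 := ⟨lt_of_lt_of_le hcx hxy, hy1⟩
    have hmv : ρ * (y - x) ≤ T₂ y - T₂ x := by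
      refine mvt_lb (h2C2.continuousOn.mono ?_) ?_ (Set.left_mem_Icc.mpr hxy)
        (Set.right_mem_Icc.mpr hxy) hxy
      · intro z hz; exact ⟨le_trans hcx.le hz.1, le_trans hz.2 hy1.le⟩
      · intro z hz
        have hz' : z ∈ Set.Ioo c 1 := ⟨lt_trans hcx hz.1, lt_trans hz.2 hy1⟩
        exact ⟨_, rfl,
          hasDerivAt_of_extension isOpen_Ioo Set.Ioo_subset_Icc_self (fun _ _ => rfl) h2C2 hz',
          hbd z ⟨le_trans hcx.le hz.1.le, le_trans hz.2.le hy1.le⟩⟩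
    rwa [h2ext hx, h2ext hy] at hmv
  have lipL : ∀ a ∈ Set.Ioo (0:ℝ) c, ∃ M > 0, ∀ x y, a ≤ x → x ≤ y → y < c →
      T y - T x ≤ M * (y - x) := by
    intro a ha
    have hd1c : ContinuousOn (derivWithin T₁ (Set.Ioc 0 c)) (Set.Ioc 0 c) :=
      h1C2.continuousOn_derivWithin (uniqueDiffOn_Ioc 0 c) one_le_two
    have hsub : Set.Icc a c ⊆ Set.Ioc 0 c := fun z hz => ⟨lt_of_lt_of_le ha.1 hz.1, hz.2⟩
    obtain ⟨z₀, hz₀m, hz₀max⟩ := isCompact_Icc.exists_isMaxOn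
      ⟨a, Set.left_mem_Icc.mpr ha.2.le⟩ (hd1c.mono hsub)
    set M := max (derivWithin T₁ (Set.Ioc 0 c) z₀) 1 with hMdef
    refine ⟨M, lt_of_lt_of_le zero_lt_one (le_max_right _ _), fun x y hax hxy hyc => ?_⟩
    have hx : x ∈ Set.Ioo 0 c := ⟨lt_of_lt_of_le ha.1 hax, lt_of_le_of_lt hxy hyc⟩
    have hy : y ∈ Set.Ioo 0 c := ⟨lt_of_lt_of_le hx.1 hxy, hyc⟩
    have hmv : T₁ y - T₁ x ≤ M * (y - x) := by
      refine mvt_ub (h1C2.continuousOn.mono ?_) ?_ (Set.left_mem_Icc.mpr hxy)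
        (Set.right_mem_Icc.mpr hxy) hxy
      · intro z hz; exact ⟨lt_of_lt_of_le hx.1 hz.1, le_trans hz.2 hyc.le⟩
      · intro z hz
        have hz' : z ∈ Set.Ioo 0 c := ⟨lt_trans hx.1 hz.1, lt_trans hz.2 hyc⟩
        refine ⟨_, rfl,
          hasDerivAt_of_extension isOpen_Ioo Set.Ioo_subset_Ioc_self (fun _ _ => rfl) h1C2 hz',
          ?_⟩
        exact le_trans (hz₀max ⟨le_trans hax hz.1.le, le_trans hz.2.le hyc.le⟩)
          (le_max_left _ _)
    rwa [h1ext hx, h1ext hy] at hmv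
  have lipR : ∃ M > 0, ∀ x y, c < x → x ≤ y → y < 1 → T y - T x ≤ M * (y - x) := by
    have hd2c : ContinuousOn (derivWithin T₂ (Set.Icc c 1)) (Set.Icc c 1) :=
      h2C2.continuousOn_derivWithin (uniqueDiffOn_Icc hc1) one_le_two
    obtain ⟨z₀, hz₀m, hz₀max⟩ := isCompact_Icc.exists_isMaxOn
      ⟨c, Set.left_mem_Icc.mpr hc1.le⟩ hd2c
    set M := max (derivWithin T₂ (Set.Icc c 1) z₀) 1 with hMdef
    refine ⟨M, lt_of_lt_of_le zero_lt_one (le_max_right _ _), fun x y hcx hxy hy1 => ?_⟩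
    have hx : x ∈ Set.Ioo c 1 := ⟨hcx, lt_of_le_of_lt hxy hy1⟩
    have hy : y ∈ Set.Ioo c 1 := ⟨lt_of_lt_of_le hcx hxy, hy1⟩
    have hmv : T₂ y - T₂ x ≤ M * (y - x) := by
      refine mvt_ub (h2C2.continuousOn.mono ?_) ?_ (Set.left_mem_Icc.mpr hxy)
        (Set.right_mem_Icc.mpr hxy) hxy
      · intro z hz; exact ⟨le_trans hcx.le hz.1, le_trans hz.2 hy1.le⟩
      · intro z hz
        have hz' : z ∈ Set.Ioo c 1 := ⟨lt_trans hcx hz.1, lt_trans hz.2 hy1⟩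
        refine ⟨_, rfl,
          hasDerivAt_of_extension isOpen_Ioo Set.Ioo_subset_Icc_self (fun _ _ => rfl) h2C2 hz',
          ?_⟩
        exact le_trans (hz₀max ⟨le_trans hcx.le hz.1.le, le_trans hz.2.le hy1.le⟩)
          (le_max_left _ _)
    rwa [h2ext hx, h2ext hy] at hmv
  have hge : ∀ y ∈ Set.Ioo (0:ℝ) c, y ≤ T y := by
    intro y hy
    by_contra hlt
    push_neg at hlt
    have hTy0 : 0 < T y := (mapsL y hy).1
    set y' := (y - T y) / 2 with hy'def
    have hy'pos : 0 < y' := by simp only [hy'def]; linarith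
    have hy'lt : y' < y := by simp only [hy'def]; linarith
    have hy'm : y' ∈ Set.Ioo (0:ℝ) c := ⟨hy'pos, lt_trans hy'lt hy.2⟩
    obtain ⟨ρ, hρ, hg⟩ := growL y' hy'm
    have h1 := hg y' y (le_refl _) hy'lt.le hy.2
    have hTy'0 : 0 < T y' := (mapsL y' hy'm).1
    have hyy' : 0 ≤ y - y' := by linarith
    nlinarith
  have lt_map : ∀ x ∈ Set.Ioo (0:ℝ) c, x < T x := by
    intro x hx
    have hx2 : x/2 ∈ Set.Ioo (0:ℝ) c := ⟨by linarith [hx.1], by linarith [hx.2, hx.1]⟩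
    obtain ⟨ρ, hρ, hg⟩ := growL (x/2) hx2
    have h1 := hg (x/2) x (le_refl _) (by linarith [hx.1]) hx.2
    have h2 := hge _ hx2
    nlinarith [hx.1]
  have H : DynCtx c T := ⟨hc0, hc1, hmono₁, hmono₂, mapsL, mapsR, himg₁, himg₂,
    contL, contR, growL, growR, lipL, lipR, lt_map⟩
  have hpre : ∀ A : Set ℝ, MeasurableSet A → μ (T ⁻¹' A) = μ A := fun A hA =>
    hinv.measure_preimage hA.nullMeasurableSet
  have hhc : 0 < h c := H.h_c_pos hdens hhcont hpre
  set D := derivWithin T₂ (Set.Icc c 1) c with hDdef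
  obtain ⟨ρ₂, hρ₂, hbd₂⟩ := h2exp
  have hD1 : 1 < D := lt_of_lt_of_le hρ₂ (hbd₂ c ⟨le_refl _, hc1.le⟩)
  have hD : 0 < D := by linarith
  have hder : HasDerivWithinAt T₂ D (Set.Icc c 1) c :=
    ((h2C2.differentiableOn two_ne_zero) c ⟨le_refl _, hc1.le⟩).hasDerivWithinAt
  have hT₂c : T₂ c = 0 := by
    have hTc0 : Tendsto T (𝓝[>] c) (𝓝 0) := tendsto_right_of_image hc1 zero_lt_one hmono₂ himg₂
    have hl : 𝓝[Set.Ioo c 1] c = 𝓝[>] c := nhdsWithin_Ioo_eq_nhdsGT hc1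
    have h1 : Tendsto T₂ (𝓝[>] c) (𝓝 (T₂ c)) := by
      have := (h2C2.continuousOn c ⟨le_refl _, hc1.le⟩).mono Set.Ioo_subset_Icc_self
      rwa [ContinuousWithinAt, hl] at this
    have h2 : Tendsto T₂ (𝓝[>] c) (𝓝 0) := by
      refine hTc0.congr' ?_
      filter_upwards [Ioo_mem_nhdsGT_of_mem ⟨le_refl c, hc1⟩] with x hx
      exact (h2ext hx).symm
    exact tendsto_nhds_unique h1 h2
  have hrat : Tendsto (fun s => (μ (Set.Ioo c (H.w s))).toReal / s) (𝓝[>] (0:ℝ))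
      (𝓝 (h c / D)) := H.ratio_tendsto hdens hhcont h2ext hder hT₂c hD hhc
  -- the sup of E k
  set S : ℕ → ℝ := fun k => sSup (E k) with hSdef
  have hbdd : ∀ k, BddAbove (E k) := fun k => BddAbove.mono (hEsub k) bddAbove_Icc
  have hne : ∀ k, (E k).Nonempty := fun k => ⟨0, hE0 k⟩
  have hS0 : ∀ k, 0 ≤ S k := fun k => le_csSup (hbdd k) (hE0 k)
  have hEsup : ∀ k, E k ⊆ Set.Icc 0 (S k) := fun k x hx =>
    ⟨(hEsub k hx).1, le_csSup (hbdd k) hx⟩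
  have hEinf : ∀ k, Set.Ioo 0 (S k) ⊆ E k := by
    intro k t ht
    obtain ⟨e, he, hte⟩ := exists_lt_of_lt_csSup (hne k) ht.2
    exact (hEi k).out (hE0 k) he ⟨ht.1.le, hte.le⟩
  have hvolE : ∀ k, volume (E k) = ENNReal.ofReal (S k) := by
    intro k
    refine le_antisymm ?_ ?_
    · calc volume (E k) ≤ volume (Set.Icc 0 (S k)) := measure_mono (hEsup k)
        _ = ENNReal.ofReal (S k) := by rw [Real.volume_Icc, sub_zero]
    · calc ENNReal.ofReal (S k) = volume (Set.Ioo 0 (S k)) := by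
            rw [Real.volume_Ioo, sub_zero]
        _ ≤ volume (E k) := measure_mono (hEinf k)
  have hvolR : ∀ k, (volume (E k)).toReal = S k := fun k => by
    rw [hvolE k, ENNReal.toReal_ofReal (hS0 k)]
  have hSpos : ∀ k, 0 < S k := by
    intro k
    rcases lt_or_ge 0 (S k) with hpos | hle
    · exact hpos
    · exfalso
      have := hEpos k
      rw [hvolE k, ENNReal.ofReal_eq_zero.mpr hle] at this
      exact lt_irrefl _ this
  have hStendN : Tendsto S atTop (𝓝 0) := by
    have h1 : Tendsto (fun k => (volume (E k)).toReal) atTop (𝓝 0) := by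
      have := (ENNReal.tendsto_toReal (by simp : (0:ℝ≥0∞) ≠ ⊤)).comp hEsmall
      exact this
    exact h1.congr fun k => hvolR k
  have hStend : Tendsto S atTop (𝓝[>] (0:ℝ)) :=
    tendsto_nhdsWithin_of_tendsto_nhds_of_eventually_within _ hStendN
      (Eventually.of_forall fun k => hSpos k)
  have hev1 : ∀ᶠ k in atTop, S k < 1 := by
    have : ∀ᶠ x : ℝ in 𝓝 (0:ℝ), x < 1 := eventually_lt_nhds zero_lt_one
    exact hStendN.eventually this
  have hE'eq : ∀ k, S k < 1 → μ (Set.Ioo c 1 ∩ T ⁻¹' E k) = μ (Set.Ioo c (H.w (S k))) := by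
    intro k hSk
    have hs01 : S k ∈ Set.Ioo (0:ℝ) 1 := ⟨hSpos k, hSk⟩
    obtain ⟨hwm, hTw⟩ := H.w_mem hs01
    have hsub1 : Set.Ioo c (H.w (S k)) ⊆ Set.Ioo c 1 ∩ T ⁻¹' E k := by
      intro x hx
      have hxm : x ∈ Set.Ioo c 1 := ⟨hx.1, lt_trans hx.2 hwm.2⟩
      refine ⟨hxm, hEinf k ⟨(mapsR x hxm).1, ?_⟩⟩
      have := H.mono₂ hxm hwm hx.2
      rwa [hTw] at this
    have hsub2 : Set.Ioo c 1 ∩ T ⁻¹' E k ⊆ Set.Ioo c (H.w (S k)) ∪ {H.w (S k)} := by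
      rintro x ⟨hxm, hxT⟩
      have hTle : T x ≤ S k := le_csSup (hbdd k) hxT
      rcases lt_or_eq_of_le hTle with hlt | heq
      · left; exact ⟨hxm.1, (H.w_lt_iff hxm hs01).mp hlt⟩
      · right
        have hx : x = H.w (S k) := hmono₂.injOn hxm hwm (by rw [hTw, heq])
        simp [hx]
    refine le_antisymm ?_ (measure_mono hsub1)
    calc μ (Set.Ioo c 1 ∩ T ⁻¹' E k)
        ≤ μ (Set.Ioo c (H.w (S k)) ∪ {H.w (S k)}) := measure_mono hsub2
      _ ≤ μ (Set.Ioo c (H.w (S k))) + μ {H.w (S k)} := measure_union_le _ _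
      _ = μ (Set.Ioo c (H.w (S k))) := by rw [hac (measure_singleton _), add_zero]
  have hGS : Tendsto (fun k => (μ (Set.Ioo c (H.w (S k)))).toReal / S k) atTop
      (𝓝 (h c / D)) := hrat.comp hStend
  constructor
  · -- part 1
    have hdiv : Tendsto (fun k => ((μ (Set.Ioo c (H.w (S k)))).toReal / S k) / (h c / D))
        atTop (𝓝 ((h c / D) / (h c / D))) := hGS.div_const _
    rw [div_self (ne_of_gt (div_pos hhc hD))] at hdiv
    refine Tendsto.congr' ?_ hdiv
    filter_upwards [hev1] with k hk
    rw [hE'eq k hk, hvolR k, div_div, mul_comm (S k) (h c / D)]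
  · -- part 2
    have hAT : Tendsto (fun k => (μ (E k)).toReal / S k) atTop atTop := by
      rw [tendsto_atTop]
      intro A
      obtain ⟨N, hN⟩ := exists_nat_gt (A / (h c / D))
      have hCpos : 0 < h c / D := div_pos hhc hD
      have hNC : A < N * (h c / D) := by
        rw [div_lt_iff₀ hCpos] at hN; linarith
      have hsumlim : Tendsto (fun s => ∑ j ∈ Finset.range N,
          ((μ (Set.Ioo c (H.w ((H.u)^[j] s)))).toReal / s)) (𝓝[>] (0:ℝ))
          (𝓝 (N * (h c / D))) := by
        have hterm : ∀ j ∈ Finset.range N,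
            Tendsto (fun s => (μ (Set.Ioo c (H.w ((H.u)^[j] s)))).toReal / s)
              (𝓝[>] (0:ℝ)) (𝓝 (h c / D)) := by
          intro j _
          obtain ⟨hr, hm⟩ := H.u_iter_ratio h1ext h1C2 hneutral j
          have hcomp := (hrat.comp hm).mul hr
          rw [mul_one] at hcomp
          refine Tendsto.congr' ?_ hcomp
          filter_upwards [Ioo_mem_nhdsGT_of_mem ⟨le_refl (0:ℝ), zero_lt_one⟩] with s hs
          exact aux_div (ne_of_gt (H.iter_mem j s hs).1)
        have := tendsto_finset_sum (Finset.range N) hterm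
        simpa [Finset.sum_const, Finset.card_range, nsmul_eq_mul] using this
      have hsumlim' := hsumlim.comp hStend
      have hevgt := hsumlim'.eventually (eventually_gt_nhds hNC)
      filter_upwards [hevgt, hev1] with k hgt hk1
      have hs01 : S k ∈ Set.Ioo (0:ℝ) 1 := ⟨hSpos k, hk1⟩
      have hsum_le : (∑ j ∈ Finset.range N,
          (μ (Set.Ioo c (H.w ((H.u)^[j] (S k))))).toReal) ≤ (μ (E k)).toReal := by
        have hle1 : (∑ j ∈ Finset.range N, μ (Set.Ioo c (H.w ((H.u)^[j] (S k)))))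
            ≤ μ (E k) := le_trans (H.sum_le hpre N _ hs01) (measure_mono (hEinf k))
        have h2 := ENNReal.toReal_mono (measure_ne_top μ _) hle1
        rwa [ENNReal.toReal_sum (fun j _ => measure_ne_top μ _)] at h2
      have hgt' : A < (∑ j ∈ Finset.range N,
          (μ (Set.Ioo c (H.w ((H.u)^[j] (S k))))).toReal) / S k := by
        rw [Finset.sum_div]
        exact hgt
      have hstep : (∑ j ∈ Finset.range N,
          (μ (Set.Ioo c (H.w ((H.u)^[j] (S k))))).toReal) / S k
          ≤ (μ (E k)).toReal / S k :=
        div_le_div_of_nonneg_right hsum_le (hS0 k)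
      linarith
    have hinv0 : Tendsto (fun k => S k / (μ (E k)).toReal) atTop (𝓝 0) := by
      have := hAT.inv_tendsto_atTop
      refine Tendsto.congr ?_ this
      intro k
      rw [Pi.inv_apply, inv_div]
    have hprod := hGS.mul hinv0
    rw [mul_zero] at hprod
    refine Tendsto.congr' ?_ hprod
    filter_upwards [hev1] with k hk
    rw [hE'eq k hk]
    exact aux_div (ne_of_gt (hSpos k))
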